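/- Every full DAG admits an ample framing. Equivalently, every full DAG admits a labeling of its edges by {1,2} such that at every inner vertex, the two incoming edges receive distinct labels and the two outgoing edges receive distinct labels. -/

import Mathlib

section Coloring

variable {X : Type} [Fintype X] [DecidableEq X]

lemma pair_of_card_two {α : Type} [Fintype α] (h : Fintype.card α = 2) (a : α) :
    ∃ b, b ≠ a ∧ ∀ x, x = a ∨ x = b := by
  rw [← Nat.card_eq_fintype_card] at h
  obtain ⟨x, y, hxy, hu⟩ := Nat.card_eq_two_iff.mp h
  have hmem : ∀ z : α, z = x ∨ z = y := by
    intro z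
    have : z ∈ ({x, y} : Set α) := by rw [hu]; trivial
    simpa using this
  rcases hmem a with rfl | rfl
  · exact ⟨y, hxy.symm, hmem⟩
  · exact ⟨x, hxy, fun z => (hmem z).symm⟩

lemma bool_resolve {p q r : Bool} (h1 : q ≠ p) (h2 : p ≠ r) : q = r := by
  cases p <;> cases q <;> cases r <;> simp_all

lemma fpf_coloring (s t : X → X)
    (hs : ∀ x, s (s x) = x) (ht : ∀ x, t (t x) = x)
    (hs' : ∀ x, s x ≠ x) (ht' : ∀ x, t x ≠ x) :
    ∃ c : X → Bool, (∀ x, c (s x) ≠ c x) ∧ (∀ x, c (t x) ≠ c x) := by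
  classical
  set F : Equiv.Perm (X × Bool) :=
    { toFun := fun u => if u.2 then (t u.1, false) else (s u.1, true)
      invFun := fun u => if u.2 then (s u.1, false) else (t u.1, true)
      left_inv := by rintro ⟨x, b⟩; cases b <;> simp [hs, ht]
      right_inv := by rintro ⟨x, b⟩; cases b <;> simp [hs, ht] } with hF
  set R : X × Bool → X × Bool := fun u => (u.1, !u.2) with hR
  have hFRF : ∀ u, F (R (F u)) = R u := by
    rintro ⟨x, b⟩; cases b <;> simp [hF, hR, hs, ht]
  have hRR : ∀ u, R (R u) = u := by rintro ⟨x, b⟩; simp [hR]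
  have hsndF : ∀ u : X × Bool, (F u).2 = !u.2 := by
    rintro ⟨x, b⟩; cases b <;> simp [hF]
  set n := orderOf F with hn
  have hnpos : 0 < n := orderOf_pos F
  have hFn : F ^ n = 1 := pow_orderOf_eq_one F
  set Orb : X × Bool → Finset (X × Bool) :=
    fun u => Finset.image (fun k : Fin n => (F ^ (k : ℕ)) u) Finset.univ with hOrb
  have mem_orb_iff : ∀ u v, v ∈ Orb u ↔ ∃ k : ℕ, k < n ∧ (F ^ k) u = v := by
    intro u v
    constructor
    · intro hv
      obtain ⟨k, -, hk⟩ := Finset.mem_image.mp hv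
      exact ⟨(k : ℕ), k.2, hk⟩
    · rintro ⟨k, hk, hkv⟩
      exact Finset.mem_image.mpr ⟨⟨k, hk⟩, Finset.mem_univ _, hkv⟩
  have pow_mem : ∀ u (k : ℕ), (F ^ k) u ∈ Orb u := by
    intro u k
    rw [mem_orb_iff u]
    refine ⟨k % n, Nat.mod_lt _ hnpos, ?_⟩
    rw [pow_mod_orderOf]
  have self_mem : ∀ u, u ∈ Orb u := by
    intro u; simpa using pow_mem u 0
  have orb_subset : ∀ u (j : ℕ), Orb ((F ^ j) u) ⊆ Orb u := by
    intro u j v hv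
    rw [mem_orb_iff] at hv
    obtain ⟨i, -, rfl⟩ := hv
    have : (F ^ i) ((F ^ j) u) = (F ^ (i + j)) u := by
      rw [pow_add, Equiv.Perm.mul_apply]
    rw [this]
    exact pow_mem u (i + j)
  have orb_pow : ∀ u (j : ℕ), Orb ((F ^ j) u) = Orb u := by
    intro u j
    refine le_antisymm (orb_subset u j) ?_
    have key : (F ^ ((n - 1) * j)) ((F ^ j) u) = u := by
      rw [← Equiv.Perm.mul_apply, ← pow_add]
      have : (n - 1) * j + j = n * j := by
        have hj : j ≤ n * j := Nat.le_mul_of_pos_left j hnpos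
        rw [Nat.sub_mul, one_mul]
        omega
      rw [this, pow_mul, hFn, one_pow, Equiv.Perm.one_apply]
    calc Orb u = Orb ((F ^ ((n - 1) * j)) ((F ^ j) u)) := by rw [key]
      _ ⊆ Orb ((F ^ j) u) := orb_subset _ _
  have orb_F : ∀ u, Orb (F u) = Orb u := by
    intro u
    have := orb_pow u 1
    rwa [pow_one] at this
  have orb_eq_of_mem : ∀ u v, v ∈ Orb u → Orb v = Orb u := by
    intro u v hv
    rw [mem_orb_iff] at hv
    obtain ⟨k, -, rfl⟩ := hv
    exact orb_pow u k
  -- injection into ℕ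
  set m : X × Bool → ℕ := fun y => ((Fintype.equivFin (X × Bool)) y : ℕ) with hm
  have hminj : Function.Injective m := by
    intro a b hab
    exact (Fintype.equivFin (X × Bool)).injective (Fin.val_injective hab)
  set μ : X × Bool → ℕ := fun u => ((Orb u).image m).min' ⟨m u, Finset.mem_image_of_mem m (self_mem u)⟩ with hμ
  have mu_orb : ∀ u v, Orb u = Orb v → μ u = μ v := by
    intro u v h; simp only [hμ, h]
  have mu_eq_orb : ∀ u v, μ u = μ v → Orb u = Orb v := by
    intro u v h
    have h1 : μ u ∈ (Orb u).image m := Finset.min'_mem _ _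
    have h2 : μ v ∈ (Orb v).image m := Finset.min'_mem _ _
    rw [h] at h1
    obtain ⟨a, ha, hma⟩ := Finset.mem_image.mp h1
    obtain ⟨b, hb, hmb⟩ := Finset.mem_image.mp h2
    have : a = b := hminj (by rw [hma, hmb])
    subst this
    rw [← orb_eq_of_mem u a ha, ← orb_eq_of_mem v a hb]
  -- parity facts
  have snd_pow_even : ∀ (k : ℕ) u, ((F ^ (2 * k)) u).2 = u.2 := by
    intro k
    induction k with
    | zero => intro u; simp
    | succ k ih =>
      intro u
      have : 2 * (k + 1) = 2 * k + 1 + 1 := by ring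
      rw [this, pow_succ, pow_succ, Equiv.Perm.mul_apply, Equiv.Perm.mul_apply]
      rw [ih (F (F u))]
      rw [hsndF, hsndF, Bool.not_not]
  have lemL : ∀ (k : ℕ) (w), (F ^ k) (R ((F ^ k) w)) = R w := by
    intro k
    induction k with
    | zero => intro w; simp
    | succ k ih =>
      intro w
      have e1 : (F ^ (k + 1)) w = (F ^ k) (F w) := by
        rw [pow_succ, Equiv.Perm.mul_apply]
      have e2 : ∀ z, (F ^ (k + 1)) z = F ((F ^ k) z) := by
        intro z; rw [pow_succ', Equiv.Perm.mul_apply]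
      have i2 : ∀ z, (F ^ (k + 1)) z = (F ^ k) (F z) := by
        intro z; rw [pow_succ, Equiv.Perm.mul_apply]
      have hcomm : (F ^ k) (F w) = F ((F ^ k) w) := by
        rw [← Equiv.Perm.mul_apply, ← pow_succ, pow_succ', Equiv.Perm.mul_apply]
      calc (F ^ (k + 1)) (R ((F ^ (k + 1)) w))
          = (F ^ k) (F (R (F ((F ^ k) w)))) := by rw [e1, i2, hcomm]
        _ = (F ^ k) (R ((F ^ k) w)) := by rw [hFRF]
        _ = R w := ih w
  have claim1 : ∀ u (k : ℕ), (F ^ k) u ≠ R u := by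
    intro u k h
    rcases Nat.even_or_odd k with ⟨q, hq⟩ | ⟨q, hq⟩
    · have : k = 2 * q := by omega
      subst this
      have h2 := snd_pow_even q u
      rw [h] at h2
      simp [hR] at h2
    · subst hq
      -- derive F v = R v for v := F^q u
      have key : F ((F ^ q) u) = R ((F ^ q) u) := by
        have e1 : (F ^ q) ((F ^ (q + 1)) u) = (F ^ (2 * q + 1)) u := by
          rw [← Equiv.Perm.mul_apply, ← pow_add,
            show q + (q + 1) = 2 * q + 1 by omega]
        have e2 := lemL q ((F ^ (q + 1)) u)
        rw [e1, h] at e2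
        -- e2 : (F ^ q) (R (R u)) = R ((F ^ (q+1)) u)
        rw [hRR] at e2
        -- e2 : (F ^ q) u = R ((F ^ (q+1)) u)
        have e3 : R ((F ^ q) u) = (F ^ (q + 1)) u := by
          rw [e2, hRR]
        rw [e3, pow_succ', Equiv.Perm.mul_apply]
      have key2 : ∀ v : X × Bool, F v ≠ R v := by
        rintro ⟨y, b⟩ hkey
        cases b
        · have hy : s y = y := by simpa [hF, hR] using hkey
          exact hs' y hy
        · have hy : t y = y := by simpa [hF, hR] using hkey
          exact ht' y hy
      exact key2 _ key
  have mu_ne : ∀ u, μ u ≠ μ (R u) := by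
    intro u h
    have horb := mu_eq_orb _ _ h
    have : R u ∈ Orb u := by rw [horb]; exact self_mem (R u)
    rw [mem_orb_iff] at this
    obtain ⟨k, _, hk⟩ := this
    exact claim1 u k hk
  have mu_F : ∀ u, μ (F u) = μ u := fun u => mu_orb _ _ (orb_F u)
  have mu_Finv : ∀ u, μ (F⁻¹ u) = μ u := by
    intro u
    have := mu_F (F⁻¹ u)
    rw [← Equiv.Perm.mul_apply, mul_inv_cancel, Equiv.Perm.one_apply] at this
    exact this.symm
  have hRF : ∀ u, R (F u) = F⁻¹ (R u) := by
    intro u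
    have := hFRF u
    calc R (F u) = F⁻¹ (F (R (F u))) := by rw [← Equiv.Perm.mul_apply, inv_mul_cancel, Equiv.Perm.one_apply]
      _ = F⁻¹ (R u) := by rw [this]
  refine ⟨fun x => decide (μ (x, false) < μ (x, true)), ?_, ?_⟩
  · intro x
    show decide (μ (s x, false) < μ (s x, true)) ≠ decide (μ (x, false) < μ (x, true))
    have hsx1 : μ (s x, true) = μ (x, false) := by
      have : (s x, true) = F (x, false) := by simp [hF]
      rw [this, mu_F]
    have hsx2 : μ (s x, false) = μ (x, true) := by
      have h1 : (s x, false) = R (F (x, false)) := by simp [hF, hR]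
      rw [h1, hRF, mu_Finv]
      rfl
    rw [hsx1, hsx2]
    have hne := mu_ne (x, false)
    have hne' : μ (x, false) ≠ μ (x, true) := by simpa [hR] using hne
    by_cases hlt : μ (x, false) < μ (x, true)
    · simp [hlt, Nat.lt_asymm hlt]
    · have : μ (x, true) < μ (x, false) := by omega
      simp [hlt, this]
  · intro x
    show decide (μ (t x, false) < μ (t x, true)) ≠ decide (μ (x, false) < μ (x, true))
    have hsx1 : μ (t x, false) = μ (x, true) := by
      have : (t x, false) = F (x, true) := by simp [hF]
      rw [this, mu_F]
    have hsx2 : μ (t x, true) = μ (x, false) := by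
      have h1 : (t x, true) = R (F (x, true)) := by simp [hF, hR]
      rw [h1, hRF, mu_Finv]
      simp [hR]
    rw [hsx1, hsx2]
    have hne := mu_ne (x, false)
    have hne' : μ (x, false) ≠ μ (x, true) := by simpa [hR] using hne
    by_cases hlt : μ (x, false) < μ (x, true)
    · simp [hlt, Nat.lt_asymm hlt]
    · have : μ (x, true) < μ (x, false) := by omega
      simp [hlt, this]

lemma invol_coloring (s t : X → X)
    (hs : ∀ x, s (s x) = x) (ht : ∀ x, t (t x) = x) :
    ∃ c : X → Bool, (∀ x, s x ≠ x → c (s x) ≠ c x) ∧ (∀ x, t x ≠ x → c (t x) ≠ c x) := by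
  classical
  set s' : X × Bool → X × Bool :=
    fun u => if s u.1 = u.1 then (u.1, !u.2) else (s u.1, u.2) with hs'def
  set t' : X × Bool → X × Bool :=
    fun u => if t u.1 = u.1 then (u.1, !u.2) else (t u.1, u.2) with ht'def
  have hs'inv : ∀ u, s' (s' u) = u := by
    rintro ⟨x, b⟩
    by_cases h : s x = x
    · simp [hs'def, h]
    · have h2 : s (s x) ≠ s x := by rw [hs]; exact fun hh => h hh.symm
      have h3 : ¬x = s x := fun hh => h hh.symm
      simp [hs'def, h, h2, h3, hs]
  have ht'inv : ∀ u, t' (t' u) = u := by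
    rintro ⟨x, b⟩
    by_cases h : t x = x
    · simp [ht'def, h]
    · have h2 : t (t x) ≠ t x := by rw [ht]; exact fun hh => h hh.symm
      have h3 : ¬x = t x := fun hh => h hh.symm
      simp [ht'def, h, h2, h3, ht]
  have hs'fpf : ∀ u, s' u ≠ u := by
    rintro ⟨x, b⟩
    by_cases h : s x = x <;> simp [hs'def, h]
  have ht'fpf : ∀ u, t' u ≠ u := by
    rintro ⟨x, b⟩
    by_cases h : t x = x <;> simp [ht'def, h]
  obtain ⟨c, hcs, hct⟩ := fpf_coloring s' t' hs'inv ht'inv hs'fpf ht'fpf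
  refine ⟨fun x => c (x, false), ?_, ?_⟩
  · intro x hx
    have := hcs (x, false)
    rwa [show s' (x, false) = (s x, false) by simp [hs'def, hx]] at this
  · intro x hx
    have := hct (x, false)
    rwa [show t' (x, false) = (t x, false) by simp [ht'def, hx]] at this



end Coloring


/-- A finite directed acyclic multigraph. -/
structure DAG where
  V : Type
  E : Type
  [fintypeV : Fintype V]
  [fintypeE : Fintype E]
  [decEqV : DecidableEq V]
  [decEqE : DecidableEq E]
  src : E → V
  tgt : E → V
  acyclic : ∀ v : V,
    ¬ Relation.TransGen (fun a b : V => ∃ e : E, src e = a ∧ tgt e = b) v v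

attribute [instance] DAG.fintypeV DAG.fintypeE DAG.decEqV DAG.decEqE

namespace DAG

variable (G : DAG)

/-- A vertex with no incoming edges. -/
def IsSource (v : G.V) : Prop := ∀ e : G.E, G.tgt e ≠ v

/-- A vertex with no outgoing edges. -/
def IsSink (v : G.V) : Prop := ∀ e : G.E, G.src e ≠ v

/-- An inner vertex is neither a source nor a sink. -/
def IsInner (v : G.V) : Prop := ¬ G.IsSource v ∧ ¬ G.IsSink v

instance : DecidablePred G.IsSource := fun v =>
  decidable_of_iff (∀ e : G.E, G.tgt e ≠ v) Iff.rfl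

instance : DecidablePred G.IsSink := fun v =>
  decidable_of_iff (∀ e : G.E, G.src e ≠ v) Iff.rfl

instance : DecidablePred G.IsInner := fun v =>
  decidable_of_iff (¬ G.IsSource v ∧ ¬ G.IsSink v) Iff.rfl

/-- In-degree: the number of edges with target `v`. -/
def indeg (v : G.V) : ℕ := Fintype.card {e : G.E // G.tgt e = v}

/-- Out-degree: the number of edges with source `v`. -/
def outdeg (v : G.V) : ℕ := Fintype.card {e : G.E // G.src e = v}

/-- A DAG is full if every inner vertex has in-degree 2 and out-degree 2. -/
def Full : Prop := ∀ v : G.V, G.IsInner v → G.indeg v = 2 ∧ G.outdeg v = 2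

/-- A route: a maximal directed path, i.e. a nonempty list of consecutive edges
starting at a source and ending at a sink. -/
structure Route where
  edges : List G.E
  ne : edges ≠ []
  chain : edges.Chain' (fun e f => G.tgt e = G.src f)
  source_start : G.IsSource (G.src (edges.head ne))
  sink_end : G.IsSink (G.tgt (edges.getLast ne))

/-- A route visits a vertex if the vertex is an endpoint of one of its edges. -/
def Route.visits (R : G.Route) (v : G.V) : Prop :=
  ∃ e ∈ R.edges, G.src e = v ∨ G.tgt e = v

/-- A framing: a linear order on the incoming edges and a linear order on the
outgoing edges of every inner vertex. -/
structure Framing where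
  inlt : G.E → G.E → Prop
  outlt : G.E → G.E → Prop
  inlt_tgt : ∀ {e f}, inlt e f → G.tgt e = G.tgt f
  inlt_inner : ∀ {e f}, inlt e f → G.IsInner (G.tgt e)
  inlt_irrefl : ∀ e, ¬ inlt e e
  inlt_trans : ∀ {e f g}, inlt e f → inlt f g → inlt e g
  inlt_total : ∀ e f, G.tgt e = G.tgt f → G.IsInner (G.tgt e) → e ≠ f →
    inlt e f ∨ inlt f e
  outlt_src : ∀ {e f}, outlt e f → G.src e = G.src f
  outlt_inner : ∀ {e f}, outlt e f → G.IsInner (G.src e)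
  outlt_irrefl : ∀ e, ¬ outlt e e
  outlt_trans : ∀ {e f g}, outlt e f → outlt f g → outlt e g
  outlt_total : ∀ e f, G.src e = G.src f → G.IsInner (G.src e) → e ≠ f →
    outlt e f ∨ outlt f e

/-- The induced order on paths ending at a common vertex: compare the two edges
just before the longest common suffix. -/
def inPathLt (F : G.Framing) (P Q : List G.E) : Prop :=
  ∃ (p q s : List G.E) (e f : G.E), e ≠ f ∧
    P = p ++ e :: s ∧ Q = q ++ f :: s ∧ F.inlt e f

/-- The induced order on paths starting at a common vertex: compare the two edges
just after the longest common prefix. -/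
def outPathLt (F : G.Framing) (P Q : List G.E) : Prop :=
  ∃ (s p q : List G.E) (e f : G.E), e ≠ f ∧
    P = s ++ e :: p ∧ Q = s ++ f :: q ∧ F.outlt e f

/-- Routes `P` and `Q` are in conflict (with `P` playing the first role) if they
pass through a common inner vertex `v` with `Pv ≺ Qv` in the in-order and
`vQ ≺ vP` in the out-order. -/
def Conflict (F : G.Framing) (P Q : G.Route) : Prop :=
  ∃ (v : G.V) (a b c d : List G.E) (ea ec : G.E),
    P.edges = a ++ [ea] ++ b ∧ Q.edges = c ++ [ec] ++ d ∧
    G.tgt ea = v ∧ G.tgt ec = v ∧ b ≠ [] ∧ d ≠ [] ∧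
    G.inPathLt F (a ++ [ea]) (c ++ [ec]) ∧ G.outPathLt F d b

/-- Two routes are coherent if they are not in conflict at any common inner
vertex (in either order). -/
def CoherentPair (F : G.Framing) (P Q : G.Route) : Prop :=
  ¬ G.Conflict F P Q ∧ ¬ G.Conflict F Q P

/-- A route is exceptional if it is coherent with every route. -/
def Exceptional (F : G.Framing) (R : G.Route) : Prop :=
  ∀ S : G.Route, G.CoherentPair F R S

/-- An edge is idle if it is the unique incoming or the unique outgoing edge of
an inner vertex. -/
def Idle (e : G.E) : Prop :=
  (G.IsInner (G.tgt e) ∧ ∀ f : G.E, G.tgt f = G.tgt e → f = e) ∨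
  (G.IsInner (G.src e) ∧ ∀ f : G.E, G.src f = G.src e → f = e)

/-- A framing is ample if every non-idle edge lies on an exceptional route. -/
def Ample (F : G.Framing) : Prop :=
  ∀ e : G.E, ¬ G.Idle e → ∃ R : G.Route, G.Exceptional F R ∧ e ∈ R.edges

/-- `e` is smallest among the edges entering its target. -/
def MinIn (F : G.Framing) (e : G.E) : Prop :=
  ∀ f : G.E, G.tgt f = G.tgt e → f ≠ e → F.inlt e f

/-- `e` is largest among the edges entering its target. -/
def MaxIn (F : G.Framing) (e : G.E) : Prop :=
  ∀ f : G.E, G.tgt f = G.tgt e → f ≠ e → F.inlt f e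

/-- `e` is smallest among the edges leaving its source. -/
def MinOut (F : G.Framing) (e : G.E) : Prop :=
  ∀ f : G.E, G.src f = G.src e → f ≠ e → F.outlt e f

/-- `e` is largest among the edges leaving its source. -/
def MaxOut (F : G.Framing) (e : G.E) : Prop :=
  ∀ f : G.E, G.src f = G.src e → f ≠ e → F.outlt f e

/-- The characteristic vector of a route. -/
noncomputable def charVec (R : G.Route) : G.E → ℝ :=
  fun e => if e ∈ R.edges then 1 else 0

end DAG

set_option maxHeartbeats 1000000 in
theorem full_dag_admits_ample_framing (G : DAG) (hfull : G.Full)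
    (hcover : ∀ e : G.E, ∃ R : G.Route, e ∈ R.edges) :
    ∃ F : G.Framing, G.Ample F := by
  classical
  have hin2 : ∀ v, G.IsInner v → Fintype.card {e : G.E // G.tgt e = v} = 2 :=
    fun v h => (hfull v h).1
  have hout2 : ∀ v, G.IsInner v → Fintype.card {e : G.E // G.src e = v} = 2 :=
    fun v h => (hfull v h).2
  -- in-mate and out-mate involutions
  set σ : G.E → G.E := fun e =>
    if h : G.IsInner (G.tgt e) then
      ((pair_of_card_two (hin2 _ h) ⟨e, rfl⟩).choose : {f : G.E // G.tgt f = G.tgt e}).1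
    else e with hσdef
  set τ : G.E → G.E := fun e =>
    if h : G.IsInner (G.src e) then
      ((pair_of_card_two (hout2 _ h) ⟨e, rfl⟩).choose : {f : G.E // G.src f = G.src e}).1
    else e with hτdef
  have hσ : ∀ e, G.IsInner (G.tgt e) →
      σ e ≠ e ∧ G.tgt (σ e) = G.tgt e ∧ (∀ f, G.tgt f = G.tgt e → f = e ∨ f = σ e) := by
    intro e h
    have spec := (pair_of_card_two (hin2 _ h)
      (⟨e, rfl⟩ : {f : G.E // G.tgt f = G.tgt e})).choose_spec
    have hσe : σ e = ((pair_of_card_two (hin2 _ h)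
        (⟨e, rfl⟩ : {f : G.E // G.tgt f = G.tgt e})).choose).1 := by
      rw [hσdef]; simp only [dif_pos h]
    refine ⟨?_, ?_, ?_⟩
    · rw [hσe]; intro hb
      exact spec.1 (Subtype.ext hb)
    · rw [hσe]
      exact ((pair_of_card_two (hin2 _ h)
        (⟨e, rfl⟩ : {f : G.E // G.tgt f = G.tgt e})).choose).2
    · intro f hf
      rcases spec.2 ⟨f, hf⟩ with h1 | h1
      · exact Or.inl (congrArg Subtype.val h1)
      · right; rw [hσe]; exact congrArg Subtype.val h1
  have hτ : ∀ e, G.IsInner (G.src e) →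
      τ e ≠ e ∧ G.src (τ e) = G.src e ∧ (∀ f, G.src f = G.src e → f = e ∨ f = τ e) := by
    intro e h
    have spec := (pair_of_card_two (hout2 _ h)
      (⟨e, rfl⟩ : {f : G.E // G.src f = G.src e})).choose_spec
    have hτe : τ e = ((pair_of_card_two (hout2 _ h)
        (⟨e, rfl⟩ : {f : G.E // G.src f = G.src e})).choose).1 := by
      rw [hτdef]; simp only [dif_pos h]
    refine ⟨?_, ?_, ?_⟩
    · rw [hτe]; intro hb
      exact spec.1 (Subtype.ext hb)
    · rw [hτe]
      exact ((pair_of_card_two (hout2 _ h)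
        (⟨e, rfl⟩ : {f : G.E // G.src f = G.src e})).choose).2
    · intro f hf
      rcases spec.2 ⟨f, hf⟩ with h1 | h1
      · exact Or.inl (congrArg Subtype.val h1)
      · right; rw [hτe]; exact congrArg Subtype.val h1
  have hσfix : ∀ e, ¬G.IsInner (G.tgt e) → σ e = e := by
    intro e h; rw [hσdef]; simp only [dif_neg h]
  have hτfix : ∀ e, ¬G.IsInner (G.src e) → τ e = e := by
    intro e h; rw [hτdef]; simp only [dif_neg h]
  have hσinv : ∀ e, σ (σ e) = e := by
    intro e
    by_cases h : G.IsInner (G.tgt e)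
    · obtain ⟨hne, htgt, _⟩ := hσ e h
      have h2 : G.IsInner (G.tgt (σ e)) := by rwa [htgt]
      obtain ⟨hne2, _, hcomp2⟩ := hσ (σ e) h2
      rcases hcomp2 e htgt.symm with h3 | h3
      · exact absurd h3.symm hne
      · exact h3.symm
    · rw [hσfix e h, hσfix e h]
  have hτinv : ∀ e, τ (τ e) = e := by
    intro e
    by_cases h : G.IsInner (G.src e)
    · obtain ⟨hne, hsrc, _⟩ := hτ e h
      have h2 : G.IsInner (G.src (τ e)) := by rwa [hsrc]
      obtain ⟨hne2, _, hcomp2⟩ := hτ (τ e) h2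
      rcases hcomp2 e hsrc.symm with h3 | h3
      · exact absurd h3.symm hne
      · exact h3.symm
    · rw [hτfix e h, hτfix e h]
  obtain ⟨c, hcσ, hcτ⟩ := invol_coloring σ τ hσinv hτinv
  have color_in : ∀ e f, G.IsInner (G.tgt e) → G.tgt f = G.tgt e → f ≠ e → c f ≠ c e := by
    intro e f h hf hne
    obtain ⟨hne1, _, hcomp⟩ := hσ e h
    rcases hcomp f hf with h1 | h1
    · exact absurd h1 hne
    · subst h1; exact hcσ e hne1
  have color_out : ∀ e f, G.IsInner (G.src e) → G.src f = G.src e → f ≠ e → c f ≠ c e := by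
    intro e f h hf hne
    obtain ⟨hne1, _, hcomp⟩ := hτ e h
    rcases hcomp f hf with h1 | h1
    · exact absurd h1 hne
    · subst h1; exact hcτ e hne1
  -- the framing
  set Fr : G.Framing := {
    inlt := fun e f => G.tgt e = G.tgt f ∧ G.IsInner (G.tgt e) ∧ c e = true ∧ c f = false
    outlt := fun e f => G.src e = G.src f ∧ G.IsInner (G.src e) ∧ c e = true ∧ c f = false
    inlt_tgt := fun h => h.1
    inlt_inner := fun h => h.2.1
    inlt_irrefl := fun e h => by
      have h1 := h.2.2.1; have h2 := h.2.2.2; rw [h1] at h2; exact Bool.noConfusion h2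
    inlt_trans := fun h1 h2 => by
      have ha := h1.2.2.2; have hb := h2.2.2.1; rw [ha] at hb; exact Bool.noConfusion hb
    inlt_total := by
      intro e f h1 h2 hne
      have hcc := color_in e f h2 h1.symm hne.symm
      cases he : c e
      · cases hf : c f
        · rw [he, hf] at hcc; exact absurd rfl hcc
        · exact Or.inr ⟨h1.symm, by rwa [← h1], by simp [hf], by simp [he]⟩
      · exact Or.inl ⟨h1, h2, by simp [he], by rw [he] at hcc; exact Bool.eq_false_iff.mpr hcc⟩
    outlt_src := fun h => h.1
    outlt_inner := fun h => h.2.1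
    outlt_irrefl := fun e h => by
      have h1 := h.2.2.1; have h2 := h.2.2.2; rw [h1] at h2; exact Bool.noConfusion h2
    outlt_trans := fun h1 h2 => by
      have ha := h1.2.2.2; have hb := h2.2.2.1; rw [ha] at hb; exact Bool.noConfusion hb
    outlt_total := by
      intro e f h1 h2 hne
      have hcc := color_out e f h2 h1.symm hne.symm
      cases he : c e
      · cases hf : c f
        · rw [he, hf] at hcc; exact absurd rfl hcc
        · exact Or.inr ⟨h1.symm, by rwa [← h1], by simp [hf], by simp [he]⟩
      · exact Or.inl ⟨h1, h2, by simp [he], by rw [he] at hcc; exact Bool.eq_false_iff.mpr hcc⟩ } with hFr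
  -- well-founded relations from acyclicity
  set r : G.V → G.V → Prop := fun a b => ∃ e : G.E, G.src e = a ∧ G.tgt e = b with hrdef
  have hacyc : ∀ v, ¬ Relation.TransGen r v v := G.acyclic
  have hacyc' : ∀ v, ¬ Relation.TransGen (Function.swap r) v v := by
    intro v hv
    exact hacyc v (Relation.transGen_swap.mp hv)
  have wfr : WellFounded (Relation.TransGen r) := by
    have h1 : IsTrans G.V (Relation.TransGen r) := ⟨fun _ _ _ => Relation.TransGen.trans⟩
    have h2 : IsIrrefl G.V (Relation.TransGen r) := ⟨hacyc⟩
    exact Finite.wellFounded_of_trans_of_irrefl _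
  have wfr' : WellFounded (Relation.TransGen (Function.swap r)) := by
    have h1 : IsTrans G.V (Relation.TransGen (Function.swap r)) :=
      ⟨fun _ _ _ => Relation.TransGen.trans⟩
    have h2 : IsIrrefl G.V (Relation.TransGen (Function.swap r)) := ⟨hacyc'⟩
    exact Finite.wellFounded_of_trans_of_irrefl _
  -- forward extension
  have fwd : ∀ e : G.E, ∃ L : List G.E,
      (e :: L).Chain' (fun a b => G.tgt a = G.src b) ∧
      G.IsSink (G.tgt ((e :: L).getLast (List.cons_ne_nil e L))) ∧
      ∀ f ∈ L, c f = c e := by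
    have wfE : WellFounded (fun e' e : G.E =>
        Relation.TransGen (Function.swap r) (G.tgt e') (G.tgt e)) :=
      InvImage.wf G.tgt wfr'
    intro e
    induction e using wfE.induction with
    | _ x IH =>
      by_cases hsink : G.IsSink (G.tgt x)
      · exact ⟨[], List.isChain_singleton x, hsink, by simp⟩
      · have hnsrc : ¬ G.IsSource (G.tgt x) := fun h => h x rfl
        have hinner : G.IsInner (G.tgt x) := ⟨hnsrc, hsink⟩
        -- two out-edges with distinct colors
        have hcard := hout2 _ hinner
        rw [← Nat.card_eq_fintype_card, Nat.card_eq_two_iff] at hcard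
        obtain ⟨a, b, hab, -⟩ := hcard
        have hcab : c b.1 ≠ c a.1 := by
          refine color_out a.1 b.1 (by rw [a.2]; exact hinner) (by rw [a.2, b.2]) ?_
          exact fun hh => hab (Subtype.ext hh).symm
        have hex : ∃ e' : G.E, G.src e' = G.tgt x ∧ c e' = c x := by
          by_cases h1 : c a.1 = c x
          · exact ⟨a.1, a.2, h1⟩
          · exact ⟨b.1, b.2, bool_resolve hcab h1⟩
        obtain ⟨e', hsrc', hc'⟩ := hex
        have hrel : Relation.TransGen (Function.swap r) (G.tgt e') (G.tgt x) :=
          Relation.TransGen.single ⟨e', hsrc', rfl⟩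
        obtain ⟨L', hchain', hlast', hcol'⟩ := IH e' hrel
        refine ⟨e' :: L', ?_, ?_, ?_⟩
        · exact List.isChain_cons_cons.mpr ⟨hsrc'.symm, hchain'⟩
        · rwa [List.getLast_cons (List.cons_ne_nil e' L')]
        · intro f hf
          rcases List.mem_cons.mp hf with rfl | hf
          · exact hc'
          · rw [hcol' f hf, hc']
  -- backward extension
  have bwd : ∀ e : G.E, ∃ L : List G.E,
      (L ++ [e]).Chain' (fun a b => G.tgt a = G.src b) ∧
      (∃ x, (L ++ [e]).head? = some x ∧ G.IsSource (G.src x)) ∧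
      ∀ f ∈ L, c f = c e := by
    have wfE : WellFounded (fun e' e : G.E =>
        Relation.TransGen r (G.src e') (G.src e)) :=
      InvImage.wf G.src wfr
    intro e
    induction e using wfE.induction with
    | _ x IH =>
      by_cases hsrc : G.IsSource (G.src x)
      · exact ⟨[], List.isChain_singleton x, ⟨x, rfl, hsrc⟩, by simp⟩
      · have hnsink : ¬ G.IsSink (G.src x) := fun h => h x rfl
        have hinner : G.IsInner (G.src x) := ⟨hsrc, hnsink⟩
        have hcard := hin2 _ hinner
        rw [← Nat.card_eq_fintype_card, Nat.card_eq_two_iff] at hcard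
        obtain ⟨a, b, hab, -⟩ := hcard
        have hcab : c b.1 ≠ c a.1 := by
          refine color_in a.1 b.1 (by rw [a.2]; exact hinner) (by rw [a.2, b.2]) ?_
          exact fun hh => hab (Subtype.ext hh).symm
        have hex : ∃ e' : G.E, G.tgt e' = G.src x ∧ c e' = c x := by
          by_cases h1 : c a.1 = c x
          · exact ⟨a.1, a.2, h1⟩
          · exact ⟨b.1, b.2, bool_resolve hcab h1⟩
        obtain ⟨e', htgt', hc'⟩ := hex
        have hrel : Relation.TransGen r (G.src e') (G.src x) :=
          Relation.TransGen.single ⟨e', rfl, htgt'⟩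
        obtain ⟨L', hchain', ⟨y, hy, hsy⟩, hcol'⟩ := IH e' hrel
        refine ⟨L' ++ [e'], ?_, ?_, ?_⟩
        · rw [List.append_assoc]
          simp only [List.Chain'] at hchain' ⊢
          rw [List.isChain_append] at hchain' ⊢
          refine ⟨hchain'.1, ?_, ?_⟩
          · simp [List.isChain_cons_cons, htgt']
          · intro p hp q hq
            have h5 := hchain'.2.2 p hp
            simp only [List.singleton_append, List.head?_cons, Option.mem_def,
              Option.some.injEq] at hq h5
            subst hq
            exact h5 e' rfl
        · refine ⟨y, ?_, hsy⟩
          rcases L' with - | ⟨h0, t0⟩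
          · simp only [List.nil_append, List.head?_cons, Option.some.injEq] at hy
            subst hy
            simp
          · simp only [List.cons_append, List.head?_cons, Option.some.injEq] at hy ⊢
            exact hy
        · intro f hf
          rcases List.mem_append.mp hf with hf | hf
          · rw [hcol' f hf, hc']
          · rw [List.mem_singleton.mp hf, hc']
  -- assemble a monochromatic route through each edge
  have mkroute : ∀ e : G.E, ∃ R : G.Route, e ∈ R.edges ∧ ∀ f ∈ R.edges, c f = c e := by
    intro e
    obtain ⟨L₁, hch1, ⟨x, hx, hsx⟩, hcol1⟩ := bwd e
    obtain ⟨L₂, hch2, hlast2, hcol2⟩ := fwd e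
    have hne : (L₁ ++ e :: L₂ : List G.E) ≠ [] := by simp
    have hchain : (L₁ ++ e :: L₂).Chain' (fun a b => G.tgt a = G.src b) := by
      simp only [List.Chain'] at hch1 hch2 ⊢
      rw [List.isChain_append]
      rw [List.isChain_append] at hch1
      refine ⟨hch1.1, hch2, ?_⟩
      intro p hp q hq
      have := hch1.2.2 p hp
      simp only [List.head?_cons, Option.mem_def, Option.some.injEq] at hq
      subst hq
      exact this e rfl
    have hhead : (L₁ ++ e :: L₂).head? = some x := by
      rcases L₁ with - | ⟨h0, t0⟩
      · simp only [List.nil_append, List.head?_cons, Option.some.injEq] at hx ⊢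
        exact hx
      · simp only [List.cons_append, List.head?_cons, Option.some.injEq] at hx ⊢
        exact hx
    have hheadeq : (L₁ ++ e :: L₂).head hne = x := by
      have := List.head?_eq_head hne
      rw [hhead] at this
      exact ((Option.some.injEq _ _).mp this).symm
    have hlasteq : (L₁ ++ e :: L₂).getLast hne
        = (e :: L₂).getLast (List.cons_ne_nil e L₂) := by
      rw [List.getLast_append_of_ne_nil hne (List.cons_ne_nil e L₂)]
    refine ⟨⟨L₁ ++ e :: L₂, hne, hchain, ?_, ?_⟩, ?_, ?_⟩
    · rw [hheadeq]; exact hsx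
    · rw [hlasteq]; exact hlast2
    · simp
    · intro f hf
      rcases List.mem_append.mp hf with hf | hf
      · exact hcol1 f hf
      · rcases List.mem_cons.mp hf with rfl | hf
        · rfl
        · exact hcol2 f hf
  -- monochromatic routes are exceptional
  have exc : ∀ (P : G.Route) (k : Bool), (∀ f ∈ P.edges, c f = k) →
      G.Exceptional Fr P := by
    intro P k hk S
    constructor
    · rintro ⟨v, a, b, cc, d, ea, ec, hP, hQ, -, -, hb, hd, hin, hout⟩
      cases k
      · obtain ⟨p, q, s0, e, f, hef, h1, h2, hlt⟩ := hin
        have he : e ∈ P.edges := by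
          rw [hP, h1]
          simp
        have := hk e he
        have h3 := hlt.2.2.1
        rw [this] at h3
        exact Bool.noConfusion h3
      · obtain ⟨s0, p, q, e, f, hef, hd', hb', hlt⟩ := hout
        have hf : f ∈ P.edges := by
          rw [hP]
          have : f ∈ b := by rw [hb']; simp
          simp [this]
        have := hk f hf
        have h3 := hlt.2.2.2
        rw [this] at h3
        exact Bool.noConfusion h3
    · rintro ⟨v, a, b, cc, d, ea, ec, hQ, hP, -, -, hb, hd, hin, hout⟩
      cases k
      · obtain ⟨s0, p, q, e, f, hef, hd', hb', hlt⟩ := hout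
        have he : e ∈ P.edges := by
          rw [hP]
          have : e ∈ d := by rw [hd']; simp
          simp [this]
        have := hk e he
        have h3 := hlt.2.2.1
        rw [this] at h3
        exact Bool.noConfusion h3
      · obtain ⟨p, q, s0, e, f, hef, h1, h2, hlt⟩ := hin
        have hf : f ∈ P.edges := by
          rw [hP, h2]
          simp
        have := hk f hf
        have h3 := hlt.2.2.2
        rw [this] at h3
        exact Bool.noConfusion h3
  refine ⟨Fr, ?_⟩
  intro e _
  obtain ⟨R, heR, hcolR⟩ := mkroute e
  exact ⟨R, exc R (c e) hcolR, heR⟩
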